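/- arXiv:math/0602225 — 2 statements merged into one kernel-verified Lean document; each statement's English description precedes it below -/
import Mathlib

section
/- Let g : [a, b] → ℝ be C¹ with g' monotone and |g'(β)| ≥ μ > 0 for all β ∈ [a, b]. Then |∫_a^b e(g(β)) dβ| ≤ 1/(πμ), where e(θ) = exp(2πiθ). -/
open Real intervalIntegral

/-- `e(θ) = exp(2πiθ)`. -/
noncomputable def e (θ : ℝ) : ℂ := Complex.exp (2 * Real.pi * Complex.I * θ)

open MeasureTheory in
/-- Abel/Stieltjes-type bound: if `h` is monotone and continuous, `F` is an antiderivative of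
`f` on `[a,b]` with `‖F‖ ≤ K` there, then `‖∫ h f‖ ≤ K(|h a| + |h b| + (h b - h a))`. -/
lemma abel_bound (a b : ℝ) (hab : a ≤ b) (h : ℝ → ℝ) (hmono : Monotone h)
    (hcont : Continuous h) (f : ℝ → ℂ) (hf : Continuous f) (F : ℝ → ℂ)
    (hF : ∀ t ∈ Set.Icc a b, HasDerivWithinAt F (f t) (Set.Icc a b) t)
    (K : ℝ) (hK : ∀ t ∈ Set.Icc a b, ‖F t‖ ≤ K) :
    ‖∫ t in a..b, (h t : ℂ) * f t‖ ≤ K * (|h a| + |h b| + (h b - h a)) := by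
  classical
  set S : StieltjesFunction ℝ := ⟨h, hmono, fun x => hcont.continuousWithinAt⟩ with hS
  have hScoe : ∀ x, S x = h x := fun x => rfl
  -- FTC on subintervals
  have hFcont : ContinuousOn F (Set.Icc a b) := fun t ht =>
    ((hF t ht).continuousWithinAt)
  have Fsub : ∀ s ∈ Set.Icc a b, (∫ t in s..b, f t) = F b - F s := by
    intro s hs
    refine intervalIntegral.integral_eq_sub_of_hasDeriv_right_of_le hs.2
      (hFcont.mono (Set.Icc_subset_Icc_left hs.1)) ?_ (hf.intervalIntegrable s b)
    intro x hx
    have hxm : x ∈ Set.Icc a b := ⟨le_trans hs.1 hx.1.le, hx.2.le⟩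
    refine (hF x hxm).mono_of_mem_nhdsWithin ?_
    exact Filter.mem_of_superset (Ioc_mem_nhdsGT_of_mem ⟨le_rfl, hx.2⟩)
      (fun y hy => ⟨le_trans hxm.1 hy.1.le, hy.2⟩)
  have hFaIb : (∫ t in Set.Ioc a b, f t) = F b - F a := by
    rw [← intervalIntegral.integral_of_le hab]; exact Fsub a ⟨le_rfl, hab⟩
  -- the Stieltjes measure
  have hmeasIoc : ∀ s t : ℝ, S.measure (Set.Ioc s t) = ENNReal.ofReal (h t - h s) := by
    intro s t; rw [S.measure_Ioc]
  haveI hfin : MeasureTheory.IsFiniteMeasure (S.measure.restrict (Set.Ioc a b)) := by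
    constructor
    rw [Measure.restrict_apply_univ, hmeasIoc]
    exact ENNReal.ofReal_lt_top
  have htotal : ((S.measure.restrict (Set.Ioc a b)) Set.univ).toReal = h b - h a := by
    rw [Measure.restrict_apply_univ, hmeasIoc, ENNReal.toReal_ofReal (by linarith [hmono hab])]
  -- step 1 : interval integral to set integral
  rw [intervalIntegral.integral_of_le hab]
  -- split pointwise
  have split : (∫ t in Set.Ioc a b, (h t : ℂ) * f t) =
      (∫ t in Set.Ioc a b, (h a : ℂ) * f t) +
      (∫ t in Set.Ioc a b, ((h t - h a : ℝ) : ℂ) * f t) := by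
    rw [← MeasureTheory.integral_add]
    · refine MeasureTheory.setIntegral_congr_fun measurableSet_Ioc (fun t _ => ?_)
      push_cast; ring
    · exact (Continuous.integrableOn_Ioc (by continuity))
    · exact (Continuous.integrableOn_Ioc (by fun_prop))
  -- first piece
  have first : (∫ t in Set.Ioc a b, (h a : ℂ) * f t) = (h a : ℂ) * (F b - F a) := by
    rw [MeasureTheory.integral_const_mul, hFaIb]
  -- second piece: Fubini
  have second : (∫ t in Set.Ioc a b, ((h t - h a : ℝ) : ℂ) * f t) =
      ∫ s in Set.Ioc a b, (F b - F s) ∂S.measure := by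
    have e1 : (∫ t in Set.Ioc a b, ((h t - h a : ℝ) : ℂ) * f t) =
        ∫ t in Set.Ioc a b, ∫ s in Set.Ioc a b,
          (if s ≤ t then f t else 0) ∂S.measure := by
      refine MeasureTheory.setIntegral_congr_fun measurableSet_Ioc (fun t ht => ?_)
      have : (fun s => if s ≤ t then f t else 0) =
          (Set.Iic t).indicator (fun _ => f t) := by
        ext s; by_cases hst : s ≤ t <;> simp [Set.indicator, hst]
      rw [this, MeasureTheory.integral_indicator_const _ measurableSet_Iic,
        measureReal_def, Measure.restrict_apply measurableSet_Iic]
      have : Set.Iic t ∩ Set.Ioc a b = Set.Ioc a t := by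
        ext x
        simp only [Set.mem_inter_iff, Set.mem_Iic, Set.mem_Ioc]
        exact ⟨fun ⟨h1, h2, _⟩ => ⟨h2, h1⟩, fun ⟨h1, h2⟩ => ⟨h2, h1, le_trans h2 ht.2⟩⟩
      rw [this, hmeasIoc, ENNReal.toReal_ofReal (by linarith [hmono ht.1.le])]
      rw [Complex.real_smul]
    rw [e1]
    have swap := MeasureTheory.integral_integral_swap
      (μ := MeasureTheory.volume.restrict (Set.Ioc a b))
      (ν := S.measure.restrict (Set.Ioc a b))
      (f := fun t s => if s ≤ t then f t else 0) ?_
    · rw [swap]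
      refine MeasureTheory.setIntegral_congr_fun measurableSet_Ioc (fun s hs => ?_)
      have : (fun t => if s ≤ t then f t else 0) = (Set.Ici s).indicator f := by
        ext t; by_cases hst : s ≤ t <;> simp [Set.indicator, hst]
      rw [this, MeasureTheory.setIntegral_indicator measurableSet_Ici]
      have : Set.Ioc a b ∩ Set.Ici s = Set.Icc s b := by
        ext x
        simp only [Set.mem_inter_iff, Set.mem_Ioc, Set.mem_Ici, Set.mem_Icc]
        exact ⟨fun ⟨⟨_, h2⟩, h3⟩ => ⟨h3, h2⟩, fun ⟨h1, h2⟩ => ⟨⟨lt_of_lt_of_le hs.1 h1, h2⟩, h1⟩⟩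
      rw [this, MeasureTheory.integral_Icc_eq_integral_Ioc,
        ← intervalIntegral.integral_of_le hs.2]
      exact Fsub s ⟨hs.1.le, hs.2⟩
    · -- integrability on the product
      obtain ⟨C, hC⟩ := (isCompact_Icc (a := a) (b := b)).exists_bound_of_continuousOn
        hf.continuousOn
      have hmeas : MeasureTheory.AEStronglyMeasurable
          (Function.uncurry fun t s => if s ≤ t then f t else 0)
          ((MeasureTheory.volume.restrict (Set.Ioc a b)).prod
            (S.measure.restrict (Set.Ioc a b))) := by
        have : Function.uncurry (fun (t s : ℝ) => if s ≤ t then f t else 0) =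
            ({p : ℝ × ℝ | p.2 ≤ p.1}).indicator (fun p => f p.1) := by
          ext p; by_cases hp : p.2 ≤ p.1 <;>
            simp [Function.uncurry, Set.indicator, hp]
        rw [this]
        exact ((hf.comp continuous_fst).stronglyMeasurable.indicator
          (isClosed_le continuous_snd continuous_fst).measurableSet).aestronglyMeasurable
      refine MeasureTheory.Integrable.mono' (g := fun _ => |C|)
        (MeasureTheory.integrable_const _) hmeas ?_
      rw [MeasureTheory.Measure.prod_restrict]
      filter_upwards [MeasureTheory.ae_restrict_mem
        (measurableSet_Ioc.prod measurableSet_Ioc)] with p hp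
      have hp1 : p.1 ∈ Set.Icc a b := ⟨hp.1.1.le, hp.1.2⟩
      by_cases hle : p.2 ≤ p.1
      · simpa [Function.uncurry, hle] using le_trans (hC p.1 hp1) (le_abs_self C)
      · simp [Function.uncurry, hle, abs_nonneg]
  -- now put together
  rw [split, first, second]
  have hFb : MeasureTheory.Integrable F (S.measure.restrict (Set.Ioc a b)) := by
    refine MeasureTheory.Integrable.mono' (g := fun _ => K)
      (MeasureTheory.integrable_const _)
      (hFcont.aestronglyMeasurable measurableSet_Icc |>.mono_measure
        (MeasureTheory.Measure.restrict_mono Set.Ioc_subset_Icc_self le_rfl)) ?_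
    filter_upwards [MeasureTheory.ae_restrict_mem measurableSet_Ioc] with s hs
    exact hK s ⟨hs.1.le, hs.2⟩
  have sub2 : (∫ s in Set.Ioc a b, (F b - F s) ∂S.measure) =
      ((S.measure.restrict (Set.Ioc a b)) Set.univ).toReal • F b
        - ∫ s in Set.Ioc a b, F s ∂S.measure := by
    rw [MeasureTheory.integral_sub (MeasureTheory.integrable_const _) hFb,
      MeasureTheory.integral_const, measureReal_def]
  rw [sub2, htotal]
  have hKnn : 0 ≤ K := le_trans (norm_nonneg _) (hK a ⟨le_rfl, hab⟩)
  have bFa : ‖F a‖ ≤ K := hK a ⟨le_rfl, hab⟩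
  have bFb : ‖F b‖ ≤ K := hK b ⟨hab, le_rfl⟩
  have bInt : ‖∫ s in Set.Ioc a b, F s ∂S.measure‖ ≤ K * (h b - h a) := by
    have := MeasureTheory.norm_integral_le_of_norm_le_const
      (μ := S.measure.restrict (Set.Ioc a b)) (f := F) (C := K) ?_
    · rwa [measureReal_def, htotal] at this
    · filter_upwards [MeasureTheory.ae_restrict_mem measurableSet_Ioc] with s hs
      exact hK s ⟨hs.1.le, hs.2⟩
  calc ‖(h a : ℂ) * (F b - F a) + ((h b - h a) • F b - ∫ s in Set.Ioc a b, F s ∂S.measure)‖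
      = ‖(h b : ℂ) * F b - (h a : ℂ) * F a - ∫ s in Set.Ioc a b, F s ∂S.measure‖ := by
        congr 1
        rw [Complex.real_smul]
        push_cast
        ring
    _ ≤ ‖(h b : ℂ) * F b - (h a : ℂ) * F a‖ + ‖∫ s in Set.Ioc a b, F s ∂S.measure‖ :=
        norm_sub_le _ _
    _ ≤ (‖(h b : ℂ) * F b‖ + ‖(h a : ℂ) * F a‖) + K * (h b - h a) := by
        gcongr; exact norm_sub_le _ _
    _ = (|h b| * ‖F b‖ + |h a| * ‖F a‖) + K * (h b - h a) := by
        rw [norm_mul, norm_mul, Complex.norm_real, Complex.norm_real,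
          Real.norm_eq_abs, Real.norm_eq_abs]
    _ ≤ (|h b| * K + |h a| * K) + K * (h b - h a) := by
        have h1 := mul_le_mul_of_nonneg_left bFb (abs_nonneg (h b))
        have h2 := mul_le_mul_of_nonneg_left bFa (abs_nonneg (h a))
        linarith
    _ = K * (|h a| + |h b| + (h b - h a)) := by ring

lemma vdc_pos_case (a b : ℝ) (hab : a < b) (g g' : ℝ → ℝ) (μ : ℝ) (hμ : 0 < μ)
    (hg : ∀ β ∈ Set.Icc a b, HasDerivWithinAt g (g' β) (Set.Icc a b) β)
    (hg'cont : ContinuousOn g' (Set.Icc a b))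
    (hmono : MonotoneOn g' (Set.Icc a b) ∨ AntitoneOn g' (Set.Icc a b))
    (hpos : ∀ β ∈ Set.Icc a b, μ ≤ g' β) :
    ‖∫ β in a..b, e (g β)‖ ≤ 1 / (Real.pi * μ) := by
  -- the clamping map
  set q : ℝ → ℝ := fun t => max a (min t b) with hq
  have hqmem : ∀ t, q t ∈ Set.Icc a b :=
    fun t => ⟨le_max_left _ _, max_le hab.le (min_le_right _ _)⟩
  have hqmono : Monotone q :=
    fun s t hst => max_le_max le_rfl (min_le_min hst le_rfl)
  have hqcont : Continuous q := continuous_const.max (continuous_id.min continuous_const)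
  have hqid : ∀ t ∈ Set.Icc a b, q t = t := by
    intro t ht
    simp only [hq, min_eq_left ht.2, max_eq_right ht.1]
  -- globalized functions
  set G : ℝ → ℝ := fun t => g' (q t) with hG
  have hGcont : Continuous G := hg'cont.comp_continuous hqcont hqmem
  have hGpos : ∀ t, μ ≤ G t := fun t => hpos (q t) (hqmem t)
  have hGne : ∀ t, G t ≠ 0 := fun t => ne_of_gt (lt_of_lt_of_le hμ (hGpos t))
  set h : ℝ → ℝ := fun t => (G t)⁻¹ with hh
  have hhpos : ∀ t, 0 < h t := fun t => inv_pos.mpr (lt_of_lt_of_le hμ (hGpos t))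
  have hhle : ∀ t, h t ≤ μ⁻¹ := fun t => inv_anti₀ hμ (hGpos t)
  have hhcont : Continuous h := hGcont.inv₀ hGne
  have hgcont : ContinuousOn g (Set.Icc a b) := fun t ht => (hg t ht).continuousWithinAt
  set c : ℂ := 2 * Real.pi * Complex.I with hc
  have hcne : c ≠ 0 := by
    simp [hc, Real.pi_ne_zero, Complex.I_ne_zero, Complex.ofReal_ne_zero]
  have hcnorm : ‖c‖ = 2 * Real.pi := by
    rw [hc]
    simp [Complex.norm_real, abs_of_pos Real.pi_pos]
  set f : ℝ → ℂ := fun t => (G t : ℂ) * e (g (q t)) with hf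
  have hecont : Continuous fun x : ℝ => e x := by
    unfold e
    exact Complex.continuous_exp.comp (by continuity)
  have hfcont : Continuous f :=
    (Complex.continuous_ofReal.comp hGcont).mul
      (hecont.comp (hgcont.comp_continuous hqcont hqmem))
  set F : ℝ → ℂ := fun t => e (g (q t)) / c with hF
  have henorm : ∀ x : ℝ, ‖e x‖ = 1 := by
    intro x
    unfold e
    rw [Complex.norm_exp]
    norm_num [Complex.mul_re, Complex.mul_im]
  have hFnorm : ∀ t ∈ Set.Icc a b, ‖F t‖ ≤ 1 / (2 * Real.pi) := by
    intro t _
    rw [hF]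
    simp only [norm_div, hcnorm, henorm]
    norm_num
  have hFderiv : ∀ t ∈ Set.Icc a b, HasDerivWithinAt F (f t) (Set.Icc a b) t := by
    intro t ht
    have h1 : HasDerivWithinAt (fun u => ((g u : ℝ) : ℂ)) ((g' t : ℝ) : ℂ)
        (Set.Icc a b) t := by
      exact (hg t ht).ofReal_comp
    have h2 : HasDerivWithinAt (fun u => c * (g u : ℂ)) (c * (g' t : ℂ))
        (Set.Icc a b) t := h1.const_mul c
    have h3 := h2.cexp
    have h4 := h3.div_const c
    refine (h4.congr ?_ ?_).congr_deriv ?_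
    · intro u hu
      simp only [hF, hqid u hu]
      rfl
    · simp only [hF, hqid t ht]
      rfl
    · simp only [hf, hG, hqid t ht]
      unfold e
      rw [hc]
      field_simp
  have hKnn : (0:ℝ) < 2 * Real.pi := by positivity
  -- the integrand identity
  have hint : (∫ β in a..b, e (g β)) = ∫ t in a..b, (h t : ℂ) * f t := by
    refine intervalIntegral.integral_congr (fun t ht => ?_)
    rw [Set.uIcc_of_le hab.le] at ht
    simp only [hf, hh, hG, hqid t ht]
    rw [eq_comm]
    have hne' : g' t ≠ 0 := by simpa [hG, hqid t ht] using hGne t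
    push_cast
    rw [← mul_assoc, inv_mul_cancel₀ (by exact_mod_cast hne'), one_mul]
  rw [hint]
  rcases hmono with hm | hm
  · -- g' monotone ⇒ h antitone ⇒ use -h
    have hmono2 : Monotone (fun t => -(h t)) := by
      intro s t hst
      simp only [neg_le_neg_iff]
      exact inv_anti₀ (lt_of_lt_of_le hμ (hGpos s))
        (hm (hqmem s) (hqmem t) (hqmono hst))
    have key := abel_bound a b hab.le (fun t => -(h t)) hmono2 hhcont.neg f hfcont F
      hFderiv (1 / (2 * Real.pi)) hFnorm
    have : (∫ t in a..b, ((-(h t) : ℝ) : ℂ) * f t) = -∫ t in a..b, (h t : ℂ) * f t := by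
      rw [← intervalIntegral.integral_neg]
      congr 1; ext t; push_cast; ring
    rw [this, norm_neg] at key
    simp only [abs_neg, abs_of_pos (hhpos a), abs_of_pos (hhpos b)] at key
    refine le_trans key ?_
    have hha := hhle a
    have hhb := hhpos b
    have heq : h a + h b + (-h b - -h a) = 2 * h a := by ring
    rw [heq]
    rw [div_mul_eq_mul_div, one_mul, div_le_div_iff₀ hKnn (by positivity)]
    have : 2 * h a ≤ 2 * μ⁻¹ := by linarith
    calc 2 * h a * (Real.pi * μ) ≤ 2 * μ⁻¹ * (Real.pi * μ) := by
          apply mul_le_mul_of_nonneg_right this (by positivity)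
      _ = 1 * (2 * Real.pi) := by field_simp
  · -- g' antitone ⇒ h monotone
    have hmono2 : Monotone h := by
      intro s t hst
      exact inv_anti₀ (lt_of_lt_of_le hμ (hGpos t))
        (hm (hqmem s) (hqmem t) (hqmono hst))
    have key := abel_bound a b hab.le h hmono2 hhcont f hfcont F
      hFderiv (1 / (2 * Real.pi)) hFnorm
    refine le_trans key ?_
    have h1 : |h a| = h a := abs_of_pos (hhpos a)
    have h2 : |h b| = h b := abs_of_pos (hhpos b)
    rw [h1, h2]
    have hha := hhpos a
    have hhb := hhle b
    have : h a + h b + (h b - h a) = 2 * h b := by ring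
    rw [this]
    rw [div_mul_eq_mul_div, one_mul, div_le_div_iff₀ hKnn (by positivity)]
    have : 2 * h b ≤ 2 * μ⁻¹ := by linarith
    calc 2 * h b * (Real.pi * μ) ≤ 2 * μ⁻¹ * (Real.pi * μ) := by
          apply mul_le_mul_of_nonneg_right this (by positivity)
      _ = 1 * (2 * Real.pi) := by field_simp

theorem van_der_corput_first_derivative
    (a b : ℝ) (hab : a < b) (g g' : ℝ → ℝ) (μ : ℝ) (hμ : 0 < μ)
    (hg : ∀ β ∈ Set.Icc a b, HasDerivWithinAt g (g' β) (Set.Icc a b) β)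
    (hg'cont : ContinuousOn g' (Set.Icc a b))
    (hmono : MonotoneOn g' (Set.Icc a b) ∨ AntitoneOn g' (Set.Icc a b))
    (hbound : ∀ β ∈ Set.Icc a b, μ ≤ |g' β|) :
    ‖∫ β in a..b, e (g β)‖ ≤ 1 / (Real.pi * μ) := by
  have habs : ∀ β ∈ Set.Icc a b, g' β ≠ 0 := by
    intro β hβ hz
    have := hbound β hβ
    rw [hz, abs_zero] at this
    linarith
  have dichotomy : (∀ β ∈ Set.Icc a b, μ ≤ g' β) ∨ (∀ β ∈ Set.Icc a b, μ ≤ -g' β) := by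
    rcases le_or_gt 0 (g' a) with hpa | hpa
    · left
      intro β hβ
      by_contra hcon
      push_neg at hcon
      have hβneg : g' β ≤ -μ := by
        rcases abs_cases (g' β) with ⟨h1, h2⟩ | ⟨h1, h2⟩
        · linarith [hbound β hβ]
        · linarith [hbound β hβ]
      have hsub : Set.uIcc a β ⊆ Set.Icc a b :=
        Set.ordConnected_Icc.uIcc_subset ⟨le_rfl, hab.le⟩ hβ
      have h0 : (0:ℝ) ∈ Set.uIcc (g' a) (g' β) :=
        Set.mem_uIcc.mpr (Or.inr ⟨by linarith, by linarith⟩)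
      obtain ⟨x, hx, hx0⟩ := intermediate_value_uIcc (hg'cont.mono hsub) h0
      exact habs x (hsub hx) hx0
    · right
      intro β hβ
      by_contra hcon
      push_neg at hcon
      have hβpos : μ ≤ g' β := by
        rcases abs_cases (g' β) with ⟨h1, h2⟩ | ⟨h1, h2⟩
        · linarith [hbound β hβ]
        · linarith [hbound β hβ]
      have hsub : Set.uIcc a β ⊆ Set.Icc a b :=
        Set.ordConnected_Icc.uIcc_subset ⟨le_rfl, hab.le⟩ hβ
      have h0 : (0:ℝ) ∈ Set.uIcc (g' a) (g' β) :=
        Set.mem_uIcc.mpr (Or.inl ⟨hpa.le, by linarith⟩)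
      obtain ⟨x, hx, hx0⟩ := intermediate_value_uIcc (hg'cont.mono hsub) h0
      exact habs x (hsub hx) hx0
  rcases dichotomy with hposd | hneg
  · exact vdc_pos_case a b hab g g' μ hμ hg hg'cont hmono hposd
  · have hg2 : ∀ β ∈ Set.Icc a b, HasDerivWithinAt (fun x => -g x) (-g' β) (Set.Icc a b) β :=
      fun β hβ => (hg β hβ).neg
    have hcont2 : ContinuousOn (fun β => -g' β) (Set.Icc a b) := hg'cont.neg
    have hmono2 : MonotoneOn (fun β => -g' β) (Set.Icc a b) ∨
        AntitoneOn (fun β => -g' β) (Set.Icc a b) := by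
      rcases hmono with hm | hm
      · exact Or.inr hm.neg
      · exact Or.inl hm.neg
    have key := vdc_pos_case a b hab (fun x => -g x) (fun β => -g' β) μ hμ hg2 hcont2
      hmono2 hneg
    have hconj : (∫ β in a..b, e (-g β)) = starRingEnd ℂ (∫ β in a..b, e (g β)) := by
      rw [intervalIntegral.integral_of_le hab.le, intervalIntegral.integral_of_le hab.le,
        ← integral_conj]
      refine MeasureTheory.setIntegral_congr_fun measurableSet_Ioc (fun t _ => ?_)
      unfold e
      rw [← Complex.exp_conj]
      congr 1
      simp only [map_mul, Complex.conj_I, Complex.conj_ofReal, map_ofNat]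
      push_cast
      ring
    calc ‖∫ β in a..b, e (g β)‖
        = ‖∫ β in a..b, e (-g β)‖ := by rw [hconj, Complex.norm_conj]
      _ ≤ 1 / (Real.pi * μ) := key
end

section
/- Let j ∈ ℤ \ {0}, h ∈ ℤ, q ∈ ℕ, and let β_h ∈ [η, ξ] satisfy j f'(β_h) = h, where f is C² on [η, ξ] with 0 < c₁ ≤ |f''| ≤ c₂. Let λ_h = ‖j f(β_h) − h β_h‖ and suppose λ_h ≤ 1/4. Set c = c₂^{−1/2}. Then for every β ∈ [η, ξ] with |β − β_h| ≤ c√(λ_h/|j|), one has (1/2)λ_h ≤ ‖j f(β) − h β‖ ≤ (3/2)λ_h. -/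
/-- Distance from a real number to the nearest integer. -/
noncomputable def distToInt (x : ℝ) : ℝ := |x - round x|

lemma distToInt_le (x : ℝ) (m : ℤ) : distToInt x ≤ |x - (m : ℝ)| := by
  by_cases hm : m = round x
  · simp [distToInt, hm]
  · have h1 : (1 : ℝ) ≤ |(round x : ℝ) - m| := by
      have : round x - m ≠ 0 := sub_ne_zero.mpr (fun hc => hm hc.symm)
      calc (1:ℝ) = ((1:ℤ) : ℝ) := by norm_num
        _ ≤ |((round x - m : ℤ) : ℝ)| := by
            exact_mod_cast Int.one_le_abs this
        _ = |(round x : ℝ) - m| := by push_cast; ring_nf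
    have h2 : |x - round x| ≤ 1/2 := abs_sub_round x
    have h3 : |(round x : ℝ) - m| ≤ |x - round x| + |x - m| := by
      have := abs_sub_abs_le_abs_sub ((round x : ℝ) - m) 0
      calc |(round x : ℝ) - m| = |((round x : ℝ) - x) + (x - m)| := by ring_nf
        _ ≤ |(round x : ℝ) - x| + |x - m| := abs_add_le _ _
        _ = |x - round x| + |x - m| := by rw [abs_sub_comm]
    have : (1:ℝ)/2 ≤ |x - (m:ℝ)| := by linarith
    calc distToInt x = |x - round x| := rfl
      _ ≤ 1/2 := h2
      _ ≤ _ := this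

lemma distToInt_lipschitz (x y : ℝ) : distToInt y ≤ distToInt x + |y - x| := by
  calc distToInt y ≤ |y - (round x : ℝ)| := distToInt_le y (round x)
    _ = |(x - round x) + (y - x)| := by ring_nf
    _ ≤ |x - round x| + |y - x| := abs_add_le _ _
    _ = distToInt x + |y - x| := rfl

/-- Quadratic Taylor bound, base point at the left endpoint. -/
lemma taylor2_left {g g' g'' : ℝ → ℝ} {a b : ℝ} (hab : a < b) {C : ℝ}
    (hg : ∀ x ∈ Set.Icc a b, HasDerivWithinAt g (g' x) (Set.Icc a b) x)
    (hg' : ∀ x ∈ Set.Icc a b, HasDerivWithinAt g' (g'' x) (Set.Icc a b) x)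
    (hC : ∀ x ∈ Set.Icc a b, |g'' x| ≤ C) :
    |g b - g a - g' a * (b - a)| ≤ C / 2 * (b - a) ^ 2 := by
  set s := Set.Icc a b with hs
  have hU : UniqueDiffOn ℝ s := uniqueDiffOn_Icc hab
  have hd : ∀ x ∈ s, derivWithin g s x = g' x := fun x hx => (hg x hx).derivWithin (hU x hx)
  have hcd : ContDiffOn ℝ 1 g s := by
    have h01 : (1 : WithTop ℕ∞) = 0 + 1 := by norm_num
    rw [h01, contDiffOn_succ_iff_derivWithin hU]
    refine ⟨fun x hx => ((hg x hx).differentiableWithinAt).mono le_rfl, by simp, ?_⟩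
    rw [contDiffOn_zero]
    exact ContinuousOn.congr (fun x hx => ((hg' x hx).differentiableWithinAt).continuousWithinAt) hd
  have h1 : ∀ y ∈ s, iteratedDerivWithin 1 g s y = g' y := by
    intro y hy
    rw [iteratedDerivWithin_one]
    exact hd y hy
  have hdiff : DifferentiableOn ℝ (iteratedDerivWithin 1 g s) (Set.Ioo a b) := by
    intro y hy
    have hy' : y ∈ s := Set.Ioo_subset_Icc_self hy
    have : DifferentiableWithinAt ℝ g' s y := (hg' y hy').differentiableWithinAt
    exact ((this.mono Set.Ioo_subset_Icc_self).congr
      (fun z hz => h1 z (Set.Ioo_subset_Icc_self hz)) (h1 y hy')).mono le_rfl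
  have hcd' : ContDiffOn ℝ 1 g (Set.uIcc a b) := by rw [Set.uIcc_of_le hab.le]; exact hcd
  have hdiff' : DifferentiableOn ℝ (iteratedDerivWithin 1 g (Set.uIcc a b)) (Set.uIoo a b) := by
    rw [Set.uIcc_of_le hab.le, Set.uIoo_of_lt hab]; exact hdiff
  obtain ⟨x', hx', heq⟩ := taylor_mean_remainder_lagrange (n := 1) hab.ne hcd' hdiff'
  rw [Set.uIcc_of_le hab.le, ← hs] at heq
  rw [Set.uIoo_of_lt hab] at hx'
  have hx's : x' ∈ s := Set.Ioo_subset_Icc_self hx'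
  have h2 : iteratedDerivWithin 2 g s x' = g'' x' := by
    rw [show (2:ℕ) = 1 + 1 from rfl, iteratedDerivWithin_succ]
    rw [derivWithin_congr h1 (h1 x' hx's)]
    exact (hg' x' hx's).derivWithin (hU x' hx's)
  have h3 : taylorWithinEval g 1 s a b = g a + g' a * (b - a) := by
    rw [show (1:ℕ) = 0 + 1 from rfl, taylorWithinEval_succ, taylor_within_zero_eval]
    have ha : a ∈ s := Set.left_mem_Icc.mpr hab.le
    rw [h1 a ha]
    simp [smul_eq_mul]
    ring
  rw [h3] at heq
  have : g b - g a - g' a * (b - a) = g'' x' * (b - a) ^ 2 / 2 := by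
    rw [show g b - g a - g' a * (b - a) = g b - (g a + g' a * (b - a)) by ring, heq, h2]
    norm_num [Nat.factorial]
  rw [this]
  have hCx := hC x' hx's
  have hb2 : (0:ℝ) ≤ (b - a) ^ 2 := sq_nonneg _
  rw [abs_div, abs_mul, abs_pow, abs_of_nonneg (sub_nonneg.mpr hab.le)]
  rw [show |(2:ℝ)| = 2 by norm_num]
  rw [div_le_iff₀ (by norm_num : (0:ℝ) < 2)]
  nlinarith [abs_nonneg (g'' x')]

/-- Quadratic Taylor bound, arbitrary base point in the interval. -/
lemma taylor2 {g g' g'' : ℝ → ℝ} {a b : ℝ} {C : ℝ}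
    (hg : ∀ x ∈ Set.Icc a b, HasDerivWithinAt g (g' x) (Set.Icc a b) x)
    (hg' : ∀ x ∈ Set.Icc a b, HasDerivWithinAt g' (g'' x) (Set.Icc a b) x)
    (hC : ∀ x ∈ Set.Icc a b, |g'' x| ≤ C)
    {t x : ℝ} (ht : t ∈ Set.Icc a b) (hx : x ∈ Set.Icc a b) :
    |g x - g t - g' t * (x - t)| ≤ C / 2 * (x - t) ^ 2 := by
  rcases lt_trichotomy t x with hlt | heq | hgt
  · have hsub : Set.Icc t x ⊆ Set.Icc a b := Set.Icc_subset_Icc ht.1 hx.2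
    exact taylor2_left hlt
      (fun y hy => (hg y (hsub hy)).mono hsub)
      (fun y hy => (hg' y (hsub hy)).mono hsub)
      (fun y hy => hC y (hsub hy))
  · simp [heq]
  · -- reflect: G y = g (x + t - y) on [x, t]
    have hsub : Set.Icc x t ⊆ Set.Icc a b := Set.Icc_subset_Icc hx.1 ht.2
    have hmaps : Set.MapsTo (fun y => x + t - y) (Set.Icc x t) (Set.Icc x t) := by
      intro y hy
      simp only [Set.mem_Icc] at hy ⊢
      constructor <;> linarith [hy.1, hy.2]
    have hinner : ∀ y ∈ Set.Icc x t,
        HasDerivWithinAt (fun z : ℝ => x + t - z) (-1) (Set.Icc x t) y := by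
      intro y _
      simpa using (hasDerivWithinAt_id y (Set.Icc x t)).const_sub (x + t)
    have hG : ∀ y ∈ Set.Icc x t,
        HasDerivWithinAt (fun z => g (x + t - z)) (-(g' (x + t - y))) (Set.Icc x t) y := by
      intro y hy
      have hmem : x + t - y ∈ Set.Icc x t := hmaps hy
      have := ((hg _ (hsub hmem)).mono hsub).comp y (hinner y hy) hmaps
      simpa [mul_comm, Function.comp_def] using this
    have hG' : ∀ y ∈ Set.Icc x t,
        HasDerivWithinAt (fun z => -(g' (x + t - z))) (g'' (x + t - y)) (Set.Icc x t) y := by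
      intro y hy
      have hmem : x + t - y ∈ Set.Icc x t := hmaps hy
      have := (((hg' _ (hsub hmem)).mono hsub).comp y (hinner y hy) hmaps).neg
      simpa [Function.comp_def, Pi.neg_def] using this
    have hCG : ∀ y ∈ Set.Icc x t, |g'' (x + t - y)| ≤ C := fun y hy => hC _ (hsub (hmaps hy))
    have key := taylor2_left hgt hG hG' hCG
    simp only [show x + t - t = x by ring, show x + t - x = t by ring] at key
    calc |g x - g t - g' t * (x - t)|
        = |g x - g t - -(g' t) * (t - x)| := by ring_nf
      _ ≤ C / 2 * (t - x) ^ 2 := key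
      _ = C / 2 * (x - t) ^ 2 := by ring

theorem distance_comparable_near_stationary_point
    (η ξ : ℝ) (hηξ : η < ξ) (f f' f'' : ℝ → ℝ) (c₁ c₂ : ℝ)
    (hc₁ : 0 < c₁) (hc₁c₂ : c₁ ≤ c₂)
    (hf : ∀ x ∈ Set.Icc η ξ, HasDerivWithinAt f (f' x) (Set.Icc η ξ) x)
    (hf' : ∀ x ∈ Set.Icc η ξ, HasDerivWithinAt f' (f'' x) (Set.Icc η ξ) x)
    (hlow : ∀ x ∈ Set.Icc η ξ, c₁ ≤ |f'' x|)
    (hup : ∀ x ∈ Set.Icc η ξ, |f'' x| ≤ c₂)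
    (j : ℤ) (hj : j ≠ 0) (h : ℤ) (q : ℕ)
    (β_h : ℝ) (hβ_h : β_h ∈ Set.Icc η ξ) (hstat : (j : ℝ) * f' β_h = h)
    (lam : ℝ) (hlam : lam = distToInt ((j : ℝ) * f β_h - h * β_h))
    (hlam4 : lam ≤ 1/4) :
    ∀ β ∈ Set.Icc η ξ, |β - β_h| ≤ c₂ ^ (-(1:ℝ)/2) * Real.sqrt (lam / |(j : ℝ)|) →
      (1/2) * lam ≤ distToInt ((j : ℝ) * f β - h * β) ∧
        distToInt ((j : ℝ) * f β - h * β) ≤ (3/2) * lam := by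
  intro β hβ hβclose
  have hc₂ : 0 < c₂ := lt_of_lt_of_le hc₁ hc₁c₂
  have hjabs : (1:ℝ) ≤ |(j:ℝ)| := by
    have : (1:ℤ) ≤ |j| := Int.one_le_abs hj
    exact_mod_cast (by exact_mod_cast this : (1:ℝ) ≤ |(j:ℤ)|)
  have hjpos : (0:ℝ) < |(j:ℝ)| := lt_of_lt_of_le one_pos hjabs
  have hlam0 : 0 ≤ lam := hlam ▸ abs_nonneg _
  -- the function g
  set g : ℝ → ℝ := fun β => (j : ℝ) * f β - h * β with hgdef
  set g' : ℝ → ℝ := fun β => (j : ℝ) * f' β - h with hg'def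
  set g'' : ℝ → ℝ := fun β => (j : ℝ) * f'' β with hg''def
  have hg : ∀ x ∈ Set.Icc η ξ, HasDerivWithinAt g (g' x) (Set.Icc η ξ) x := by
    intro x hx
    have h1 := (hf x hx).const_mul (j : ℝ)
    have h2 := (hasDerivWithinAt_id x (Set.Icc η ξ)).const_mul (h : ℝ)
    simpa [hgdef, hg'def, Pi.sub_def] using h1.sub h2
  have hg' : ∀ x ∈ Set.Icc η ξ, HasDerivWithinAt g' (g'' x) (Set.Icc η ξ) x := by
    intro x hx
    have h1 := (hf' x hx).const_mul (j : ℝ)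
    simpa [hg'def, hg''def] using h1.sub_const (h : ℝ)
  have hCg : ∀ x ∈ Set.Icc η ξ, |g'' x| ≤ c₂ * |(j:ℝ)| := by
    intro x hx
    have := hup x hx
    calc |g'' x| = |(j:ℝ)| * |f'' x| := by rw [hg''def]; simp [abs_mul]
      _ ≤ |(j:ℝ)| * c₂ := by gcongr
      _ = c₂ * |(j:ℝ)| := by ring
  -- squared distance bound
  have hr2 : (β - β_h) ^ 2 ≤ c₂⁻¹ * (lam / |(j:ℝ)|) := by
    have hsq : (c₂ ^ (-(1:ℝ)/2) * Real.sqrt (lam / |(j:ℝ)|)) ^ 2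
        = c₂⁻¹ * (lam / |(j:ℝ)|) := by
      rw [mul_pow, Real.sq_sqrt (by positivity)]
      congr 1
      rw [← Real.rpow_natCast (c₂ ^ (-(1:ℝ)/2)) 2, ← Real.rpow_mul hc₂.le]
      norm_num [Real.rpow_neg_one]
    calc (β - β_h)^2 ≤ |β - β_h|^2 := by rw [sq_abs]
      _ ≤ (c₂ ^ (-(1:ℝ)/2) * Real.sqrt (lam / |(j:ℝ)|))^2 := by
          apply pow_le_pow_left₀ (abs_nonneg _) hβclose
      _ = _ := hsq
  have hstat' : g' β_h = 0 := by rw [hg'def]; simp [hstat]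
  have htay := taylor2 hg hg' hCg hβ_h hβ
  rw [hstat', zero_mul, sub_zero] at htay
  have hhalf : |g β - g β_h| ≤ lam / 2 := by
    calc |g β - g β_h| ≤ c₂ * |(j:ℝ)| / 2 * (β - β_h) ^ 2 := htay
      _ ≤ c₂ * |(j:ℝ)| / 2 * (c₂⁻¹ * (lam / |(j:ℝ)|)) := by
          apply mul_le_mul_of_nonneg_left hr2 (by positivity)
      _ = lam / 2 := by field_simp
  have hupd : distToInt (g β) ≤ lam + lam / 2 := by
    have := distToInt_lipschitz (g β_h) (g β)
    rw [← hlam] at this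
    linarith [this, hhalf]
  have hlod : lam - lam / 2 ≤ distToInt (g β) := by
    have := distToInt_lipschitz (g β) (g β_h)
    rw [← hlam] at this
    have habs : |g β_h - g β| ≤ lam / 2 := by rw [abs_sub_comm]; exact hhalf
    linarith
  constructor
  · calc (1/2) * lam = lam - lam / 2 := by ring
      _ ≤ distToInt ((j : ℝ) * f β - h * β) := hlod
  · calc distToInt ((j : ℝ) * f β - h * β) ≤ lam + lam / 2 := hupd
      _ = (3/2) * lam := by ring
end
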